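/- For every player i ∈ {1,...,n}, every joint action x = (x_1,...,x_n) ∈ (ℝ^d)^n, and every alternative action y ∈ ℝ^d, the loss difference equals the potential difference: ℓ_i(x_i, x_{−i}) − ℓ_i(y, x_{−i}) = φ(x_i, x_{−i}) − φ(y, x_{−i}). Hence the Battling Influencers Game is an exact potential game with potential φ. -/
import Mathlib


open scoped RealInnerProductSpace

noncomputable section

/-- Player `i`'s loss in the Battling Influencers Game:
`ℓ_i(x) = ‖w_0 x_0 + ∑_{j=1}^n w_j x_j − t_i‖₂²`. -/
def loss {d n : ℕ} (w0 : ℝ) (x0 : EuclideanSpace ℝ (Fin d)) (w : Fin n → ℝ)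
    (t : Fin n → EuclideanSpace ℝ (Fin d)) (i : Fin n)
    (x : Fin n → EuclideanSpace ℝ (Fin d)) : ℝ :=
  ‖w0 • x0 + (∑ j, w j • x j) - t i‖ ^ 2

/-- The potential function
`φ(x) = ‖∑_{j=0}^n w_j x_j‖₂² − 2 ∑_{j=1}^n w_j ⟨t_j, x_j⟩`. -/
def potential {d n : ℕ} (w0 : ℝ) (x0 : EuclideanSpace ℝ (Fin d)) (w : Fin n → ℝ)
    (t : Fin n → EuclideanSpace ℝ (Fin d))
    (x : Fin n → EuclideanSpace ℝ (Fin d)) : ℝ :=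
  ‖w0 • x0 + (∑ j, w j • x j)‖ ^ 2 - 2 * ∑ j, w j * ⟪t j, x j⟫

/-- The Battling Influencers Game is an exact potential game with potential `φ`:
for every player `i`, profile `x`, and deviation `y`,
`ℓ_i(x_i, x_{−i}) − ℓ_i(y, x_{−i}) = φ(x_i, x_{−i}) − φ(y, x_{−i})`. -/
theorem big_exact_potential {d n : ℕ} (w0 : ℝ) (x0 : EuclideanSpace ℝ (Fin d))
    (w : Fin n → ℝ) (t : Fin n → EuclideanSpace ℝ (Fin d)) (i : Fin n)
    (x : Fin n → EuclideanSpace ℝ (Fin d)) (y : EuclideanSpace ℝ (Fin d)) :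
    loss w0 x0 w t i x - loss w0 x0 w t i (Function.update x i y)
      = potential w0 x0 w t x - potential w0 x0 w t (Function.update x i y) := by
  classical
  have h1 : (∑ j, w j • Function.update x i y j)
      = (∑ j, w j • x j) + (w i • y - w i • x i) := by
    rw [← Finset.add_sum_erase _ (fun j => w j • Function.update x i y j) (Finset.mem_univ i),
        ← Finset.add_sum_erase _ (fun j => w j • x j) (Finset.mem_univ i),
        Finset.sum_congr rfl
          (fun j hj => by rw [Function.update_of_ne (Finset.ne_of_mem_erase hj)])]
    simp only [Function.update_self]
    abel
  have h2 : (∑ j, w j * ⟪t j, Function.update x i y j⟫)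
      = (∑ j, w j * ⟪t j, x j⟫) + (w i * ⟪t i, y⟫ - w i * ⟪t i, x i⟫) := by
    rw [← Finset.add_sum_erase _ (fun j => w j * ⟪t j, Function.update x i y j⟫)
          (Finset.mem_univ i),
        ← Finset.add_sum_erase _ (fun j => w j * ⟪t j, x j⟫) (Finset.mem_univ i),
        Finset.sum_congr rfl
          (fun j hj => by rw [Function.update_of_ne (Finset.ne_of_mem_erase hj)])]
    simp only [Function.update_self]
    ring
  simp only [loss, potential, h1, h2]
  have h3 : w0 • x0 + ((∑ j, w j • x j) + (w i • y - w i • x i))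
      = (w0 • x0 + ∑ j, w j • x j) + (w i • y - w i • x i) := by abel
  have h4 : (w0 • x0 + ∑ j, w j • x j) + (w i • y - w i • x i) - t i
      = ((w0 • x0 + ∑ j, w j • x j) - t i) + (w i • y - w i • x i) := by abel
  rw [h3, h4, norm_add_sq_real ((w0 • x0 + ∑ j, w j • x j) - t i),
      norm_add_sq_real (w0 • x0 + ∑ j, w j • x j)]
  simp only [inner_sub_left, inner_sub_right, real_inner_smul_right]
  ring

end
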